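/- Fix integers n ≥ 2 and 1 ≤ d < n. Let 1 ≤ i ≤ d and let w ∈ Λ^i ℝ^{d+1} satisfy π_−(w) ≠ 0. Then the image of the affine map f_w : ℝ^d → V_+ given by f_w(s) = π_+(u(s)w) is an affine subspace of V_+ of dimension at least i. -/

import Mathlib

open Matrix MeasureTheory Filter
open scoped ENNReal NNReal

noncomputable section

/-! ## Exterior powers in coordinates -/

/-- Index set for the standard wedge basis of Λ^k ℝ^m : k-element subsets of {0,…,m−1}. -/
abbrev Idx (m k : ℕ) := {J : Finset (Fin m) // J.card = k}

/-- Model for the k-th exterior power of ℝ^m, with its sup norm w.r.t. the wedge basis. -/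
abbrev Lam (m k : ℕ) := Idx m k → ℝ

/-- Increasing enumeration of a k-element subset of Fin m. -/
def finsetEmb {m k : ℕ} (J : Idx m k) : Fin k → Fin m := fun a => (J.1.orderIsoOfFin J.2 a : Fin m)

/-- Action of an m×m matrix on the k-th exterior power, in the standard wedge basis
(given by the k×k minors). -/
def extPow {m k : ℕ} (g : Matrix (Fin m) (Fin m) ℝ) (v : Lam m k) : Lam m k :=
  fun J => ∑ K : Idx m k, (g.submatrix (finsetEmb J) (finsetEmb K)).det * v K

/-- The wedge product v₁ ∧ ⋯ ∧ v_k of k vectors in ℝ^m, in coordinates. -/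
def wedge {m k : ℕ} (vs : Fin k → (Fin m → ℝ)) : Lam m k :=
  fun J => (Matrix.of fun a b : Fin k => vs b (finsetEmb J a)).det

/-- The wedge product of k integer vectors. -/
def wedgeInt {m k : ℕ} (vs : Fin k → (Fin m → ℤ)) : Lam m k :=
  wedge (fun j i => (vs j i : ℝ))

/-- The projection π_i of Λ^k ℝ^m onto the span of the wedges e_J having exactly i factors
among e_0,…,e_d (zero if i is out of range). -/
def proj (d : ℕ) {m k : ℕ} (i : ℕ) (v : Lam m k) : Lam m k :=
  fun J => if (J.1.filter (fun x : Fin m => (x : ℕ) ≤ d)).card = i then v J else 0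

/-- The projection π₊ of Λ^k ℝ^{d+1} onto the span of the wedges e_J with 0 ∈ J. -/
def projPlus {d k : ℕ} (v : Lam (d+1) k) : Lam (d+1) k :=
  fun J => if (0 : Fin (d+1)) ∈ J.1 then v J else 0

/-- The projection π₋ of Λ^k ℝ^{d+1} onto the span of the wedges e_J with 0 ∉ J. -/
def projMinus {d k : ℕ} (v : Lam (d+1) k) : Lam (d+1) k :=
  fun J => if (0 : Fin (d+1)) ∉ J.1 then v J else 0

/-! ## The homogeneous space X = SL_{n+1}(ℝ)/SL_{n+1}(ℤ) -/

noncomputable instance SLtop (m : ℕ) : TopologicalSpace (Matrix.SpecialLinearGroup (Fin m) ℝ) :=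
  TopologicalSpace.induced (fun g => (g : Matrix (Fin m) (Fin m) ℝ)) inferInstance

abbrev SLn (m : ℕ) := Matrix.SpecialLinearGroup (Fin m) ℝ

/-- Γ = SL_m(ℤ) viewed as a subgroup of SL_m(ℝ). -/
def Gamma (m : ℕ) : Subgroup (SLn m) :=
  (Matrix.SpecialLinearGroup.map (n := Fin m) (Int.castRingHom ℝ)).range

/-- The space X = SL_m(ℝ)/SL_m(ℤ). -/
abbrev Xsp (m : ℕ) := SLn m ⧸ Gamma m

/-! ## Matrices and one-parameter subgroups -/

lemma det_upperTri {m : ℕ} (M : Matrix (Fin m) (Fin m) ℝ)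
    (hoff : ∀ i j : Fin m, (j : ℕ) < (i : ℕ) → M i j = 0)
    (hdiag : ∀ i, M i i = 1) : M.det = 1 := by
  have hbt : M.BlockTriangular id := fun i j hij => hoff i j hij
  rw [Matrix.det_of_upperTriangular hbt]
  simp [hdiag]

/-- u(s): the identity matrix with s₁,…,s_d placed in the first row (columns 1,…,d). -/
def uMat (n d : ℕ) (s : Fin d → ℝ) : Matrix (Fin (n+1)) (Fin (n+1)) ℝ :=
  Matrix.of fun i j =>
    if i = j then 1
    else if h : i = 0 ∧ 1 ≤ (j : ℕ) ∧ (j : ℕ) ≤ d then s ⟨(j : ℕ) - 1, by omega⟩ else 0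

/-- u(s) as an element of SL_{n+1}(ℝ). -/
def uSL (n d : ℕ) (s : Fin d → ℝ) : SLn (n+1) :=
  ⟨uMat n d s, det_upperTri _ (fun i j hij => by
      simp only [uMat, Matrix.of_apply]
      rw [if_neg (by rintro rfl; omega), dif_neg (by rintro ⟨rfl, h1, h2⟩; simp at hij)])
    (fun i => by simp [uMat])⟩

/-- u(x): the identity matrix with x ∈ ℝ^n placed in the first row. -/
def uxMat (n : ℕ) (x : Fin n → ℝ) : Matrix (Fin (n+1)) (Fin (n+1)) ℝ :=
  Matrix.of fun i j =>
    if i = j then 1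
    else if h : i = 0 ∧ 1 ≤ (j : ℕ) then x ⟨(j : ℕ) - 1, by have := j.isLt; omega⟩ else 0

/-- u(x) as an element of SL_{n+1}(ℝ). -/
def uxSL (n : ℕ) (x : Fin n → ℝ) : SLn (n+1) :=
  ⟨uxMat n x, det_upperTri _ (fun i j hij => by
      simp only [uxMat, Matrix.of_apply]
      rw [if_neg (by rintro rfl; omega), dif_neg (by rintro ⟨rfl, h1⟩; simp at hij)])
    (fun i => by simp [uxMat])⟩

/-- u_A: the block unipotent matrix with I_{d+1}, I_{n−d} on the diagonal and A in the
upper-right block. -/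
def uAMat (n d : ℕ) (A : Matrix (Fin (d+1)) (Fin (n-d)) ℝ) : Matrix (Fin (n+1)) (Fin (n+1)) ℝ :=
  Matrix.of fun i j =>
    if i = j then 1
    else if h : (i : ℕ) ≤ d ∧ d + 1 ≤ (j : ℕ) then
      A ⟨(i : ℕ), by omega⟩ ⟨(j : ℕ) - (d+1), by have := j.isLt; omega⟩ else 0

/-- u_A as an element of SL_{n+1}(ℝ). -/
def uASL (n d : ℕ) (A : Matrix (Fin (d+1)) (Fin (n-d)) ℝ) : SLn (n+1) :=
  ⟨uAMat n d A, det_upperTri _ (fun i j hij => by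
      simp only [uAMat, Matrix.of_apply]
      rw [if_neg (by rintro rfl; omega), dif_neg (by rintro ⟨h1, h2⟩; omega)])
    (fun i => by simp [uAMat])⟩

lemma sum_ite_fin (m k : ℕ) (hk : k ≤ m) (a b : ℝ) :
    (∑ i : Fin m, if (i : ℕ) < k then a else b) = k * a + ((m - k : ℕ) : ℝ) * b := by
  rw [Fin.sum_univ_eq_sum_range (fun i => if i < k then a else b) m]
  rw [Finset.range_eq_Ico, ← Finset.sum_Ico_consecutive _ (Nat.zero_le k) hk]
  rw [Finset.sum_congr rfl (fun i hi => if_pos (Finset.mem_Ico.mp hi).2),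
    Finset.sum_congr rfl (g := fun _ => b)
      (fun i hi => if_neg (Nat.not_lt.mpr (Finset.mem_Ico.mp hi).1))]
  simp [Nat.card_Ico, mul_comm]

/-- A diagonal matrix with entries exp (f i), as an element of SL_m(ℝ). -/
def diagSL (m : ℕ) (f : Fin m → ℝ) (h : ∑ i, f i = 0) : SLn m :=
  ⟨Matrix.diagonal fun i => Real.exp (f i), by
    rw [Matrix.det_diagonal, ← Real.exp_sum, h, Real.exp_zero]⟩

/-- b_t = diag(e^{(n−d)t/((d+1)(n+1))}·I_{d+1}, e^{−t/(n+1)}·I_{n−d}) ∈ SL_{n+1}(ℝ). -/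
def btSL (n d : ℕ) (h : d ≤ n) (t : ℝ) : SLn (n+1) :=
  diagSL (n+1)
    (fun i => if (i : ℕ) < d + 1 then ((n : ℝ) - (d : ℝ)) * t / (((d : ℝ) + 1) * ((n : ℝ) + 1))
      else -t / ((n : ℝ) + 1))
    (by
      rw [sum_ite_fin (n+1) (d+1) (by omega)]
      have h1 : ((n + 1 - (d + 1) : ℕ) : ℝ) = (n : ℝ) - (d : ℝ) := by
        have h2 : (n + 1 - (d + 1) : ℕ) = n - d := by omega
        rw [h2, Nat.cast_sub h]
      rw [h1]
      have hd1 : ((d : ℝ) + 1) ≠ 0 := by positivity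
      have hn1 : ((n : ℝ) + 1) ≠ 0 := by positivity
      field_simp
      push_cast
      ring)

/-- c_t = diag(e^{dt/(d+1)}, e^{−t/(d+1)}·I_d, I_{n−d}) ∈ SL_{n+1}(ℝ). -/
def ctSL (n d : ℕ) (h : d ≤ n) (t : ℝ) : SLn (n+1) :=
  diagSL (n+1)
    (fun i => if (i : ℕ) = 0 then (d : ℝ) * t / ((d : ℝ) + 1)
      else if (i : ℕ) < d + 1 then -t / ((d : ℝ) + 1) else 0)
    (by
      rw [Fin.sum_univ_succ]
      simp only [Fin.val_zero, if_pos rfl, Fin.val_succ]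
      have key : ∀ i : Fin n,
          (if (i : ℕ) + 1 = 0 then (d : ℝ) * t / ((d : ℝ) + 1)
            else if (i : ℕ) + 1 < d + 1 then -t / ((d : ℝ) + 1) else 0)
          = (if (i : ℕ) < d then -t / ((d : ℝ) + 1) else 0) := by
        intro i
        rw [if_neg (by omega)]
        by_cases hc : (i : ℕ) < d
        · rw [if_pos (by omega), if_pos hc]
        · rw [if_neg (by omega), if_neg hc]
      rw [Finset.sum_congr rfl fun i _ => key i, sum_ite_fin n d h]
      have hd1 : ((d : ℝ) + 1) ≠ 0 := by positivity
      field_simp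
      simp only [↓reduceIte]
      field_simp
      try ring)

/-- g_t = diag(e^{nt/(n+1)}, e^{−t/(n+1)}·I_n) ∈ SL_{n+1}(ℝ). -/
def gtSL (n : ℕ) (t : ℝ) : SLn (n+1) :=
  diagSL (n+1)
    (fun i => if (i : ℕ) = 0 then (n : ℝ) * t / ((n : ℝ) + 1) else -t / ((n : ℝ) + 1))
    (by
      rw [Fin.sum_univ_succ]
      simp only [Fin.val_zero, if_pos rfl, Fin.val_succ]
      have key : ∀ i : Fin n,
          (if (i : ℕ) + 1 = 0 then (n : ℝ) * t / ((n : ℝ) + 1) else -t / ((n : ℝ) + 1))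
          = -t / ((n : ℝ) + 1) := fun i => if_neg (by omega)
      rw [Finset.sum_congr rfl fun i _ => key i, Finset.sum_const, Finset.card_univ,
        Fintype.card_fin, nsmul_eq_mul]
      have hn1 : ((n : ℝ) + 1) ≠ 0 := by positivity
      field_simp
      simp only [↓reduceIte]
      field_simp
      try ring)

/-- c_t = diag(e^{dt/(d+1)}, e^{−t/(d+1)}·I_d) as a (d+1)×(d+1) matrix. -/
def ctMat1 (d : ℕ) (t : ℝ) : Matrix (Fin (d+1)) (Fin (d+1)) ℝ :=
  Matrix.diagonal fun i =>
    if (i : ℕ) = 0 then Real.exp ((d : ℝ) * t / ((d : ℝ) + 1))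
    else Real.exp (-t / ((d : ℝ) + 1))

/-- c_t = diag(e^{dt/(d+1)}, e^{−t/(d+1)}·I_d, I_{n−d}) as an (n+1)×(n+1) matrix. -/
def ctMatN (n d : ℕ) (t : ℝ) : Matrix (Fin (n+1)) (Fin (n+1)) ℝ :=
  Matrix.diagonal fun i =>
    if (i : ℕ) = 0 then Real.exp ((d : ℝ) * t / ((d : ℝ) + 1))
    else if (i : ℕ) < d + 1 then Real.exp (-t / ((d : ℝ) + 1)) else 1

/-- The identification Fin (n+1) ≃ Fin (d+1) ⊕ Fin (n−d). -/
def finSplit (n d : ℕ) (h : d ≤ n) : Fin (n+1) ≃ Fin (d+1) ⊕ Fin (n-d) :=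
  (finCongr (by omega)).trans finSumFinEquiv.symm

/-- The embedding SL_{d+1}(ℝ) → SL_{n+1}(ℝ), h ↦ diag(h, I_{n−d}); its image is the
subgroup H of the paper. -/
def embedSL (n d : ℕ) (h : d ≤ n) (g : Matrix.SpecialLinearGroup (Fin (d+1)) ℝ) : SLn (n+1) :=
  ⟨Matrix.reindex (finSplit n d h).symm (finSplit n d h).symm
      (Matrix.fromBlocks (g : Matrix (Fin (d+1)) (Fin (d+1)) ℝ) 0 0
        (1 : Matrix (Fin (n-d)) (Fin (n-d)) ℝ)), by
    rw [Matrix.det_reindex_self, Matrix.det_fromBlocks_zero₂₁, Matrix.det_one, mul_one]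
    exact g.2⟩

/-! ## Height functions and exponents -/

/-- The cube I^d = [−1/2, 1/2]^d. -/
def Icube (d : ℕ) : Set (Fin d → ℝ) := Set.univ.pi fun _ => Set.Icc (-(1/2) : ℝ) (1/2)

/-- The function φ_ε on Λ^k ℝ^{n+1}, with values in [0,∞] (here δ_k = (n+1−k)k). -/
def phiFn (n d k : ℕ) (ε : ℝ) (v : Lam (n+1) k) : ℝ≥0∞ :=
  if ‖proj d 0 v + proj d (d+1) v‖ < ε ^ ((n + 1 - k) * k) then
    ⨅ i ∈ Finset.Icc 1 d,
      ENNReal.ofReal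
          (ε ^ ((((d : ℝ) + 1) / (((d : ℝ) + 1) - (i : ℝ))) * (((n + 1 - k) * k : ℕ) : ℝ)))
        * ENNReal.ofReal ‖proj d i v‖ ^ (-(((d : ℝ) + 1) / (((d : ℝ) + 1) - (i : ℝ))))
  else 0

/-- v ∈ Λ^k ℝ^{n+1} is a y-integral vector: v = g(v₁ ∧ ⋯ ∧ v_k) for a representative g
of y and linearly independent integer vectors v₁,…,v_k. -/
def IsIntegralVec (n : ℕ) {k : ℕ} (y : Xsp (n+1)) (v : Lam (n+1) k) : Prop :=
  ∃ g : SLn (n+1), (QuotientGroup.mk g : Xsp (n+1)) = y ∧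
    ∃ w : Fin k → (Fin (n+1) → ℤ), LinearIndependent ℤ w ∧
      v = extPow (g : Matrix (Fin (n+1)) (Fin (n+1)) ℝ) (wedgeInt w)

/-- The Margulis height function α_ε^θ on X. -/
def alphaF (n d : ℕ) (ε θ : ℝ) (y : Xsp (n+1)) : ℝ≥0∞ :=
  ⨆ k ∈ Finset.Icc 1 n, ⨆ v : Lam (n+1) k, ⨆ _ : v ≠ 0 ∧ IsIntegralVec n y v, phiFn n d k ε v ^ θ

/-- The dynamical exponent ρ(y; b_t, α) = limsup_{t→∞} log α(b_t y) / t ∈ [−∞,∞]. -/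
def rhoExp (n d : ℕ) (h : d ≤ n) (α : Xsp (n+1) → ℝ≥0∞) (y : Xsp (n+1)) : EReal :=
  Filter.limsup (fun t : ℝ => ENNReal.log (α (btSL n d h t • y)) / (t : EReal)) Filter.atTop

/-- α̃_δ(y) = ∫₀^∞ e^{−δt} α(b_t y) dt. -/
def atilde (n d : ℕ) (h : d ≤ n) (δ : ℝ) (α : Xsp (n+1) → ℝ≥0∞) (y : Xsp (n+1)) : ℝ≥0∞ :=
  ∫⁻ t in Set.Ioi (0 : ℝ), ENNReal.ofReal (Real.exp (-δ * t)) * α (btSL n d h t • y)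

/-- α is Lipschitz with respect to the action of H = diag(SL_{d+1}(ℝ), I_{n−d}). -/
def LipschitzWrtH (n d : ℕ) (h : d ≤ n) (α : Xsp (n+1) → ℝ≥0∞) : Prop :=
  ∀ F : Set (SLn (n+1)), F ⊆ Set.range (embedSL n d h) → IsCompact F →
    ∃ C : ℝ, 1 ≤ C ∧ ∀ g ∈ F, ∀ y : Xsp (n+1), α (g • y) ≤ ENNReal.ofReal C * α y

/-- y ∈ X is g_t-divergent on average. -/
def gDivergentOnAvg (n : ℕ) (y : Xsp (n+1)) : Prop :=
  ∀ K : Set (Xsp (n+1)), IsCompact K →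
    Tendsto (fun N : ℕ => ((Set.ncard {l : ℕ | 1 ≤ l ∧ l ≤ N ∧ gtSL n l • y ∈ K} : ℝ) / N))
      atTop (nhds 0)

/-- The set B_x(M,t,m;N) of the paper (for x = y_A and the height function α̃ = α̃_δ). -/
def Bset (n d : ℕ) (h : d ≤ n) (δ : ℝ) (α : Xsp (n+1) → ℝ≥0∞) (yA : Xsp (n+1))
    (M t : ℝ) (m N : ℕ) : Set (Fin d → ℝ) :=
  {s : Fin d → ℝ | s ∈ Icube d ∧
    atilde n d h δ α ((gtSL n ((m : ℝ) * t) * uSL n d s) • yA) < ENNReal.ofReal M ∧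
    ∀ l : ℕ, 1 ≤ l → l ≤ N →
      ENNReal.ofReal M ≤ atilde n d h δ α ((gtSL n (((m : ℝ) + (l : ℝ)) * t) * uSL n d s) • yA)}

/-! ## Diophantine approximation -/

/-- x ∈ ℝ^n is a singular vector. -/
def IsSingular (n : ℕ) (x : Fin n → ℝ) : Prop :=
  ∀ ε : ℝ, 0 < ε → ∃ N₀ : ℝ, ∀ N : ℝ, N₀ ≤ N → ∃ q : Fin n → ℤ, q ≠ 0 ∧ ∃ p : ℤ,
    |(∑ i, (q i : ℝ) * x i) - (p : ℝ)| ≤ ε * N ^ (-(n : ℝ)) ∧ ‖q‖ ≤ N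

/-- The vector (s, s̃A) ∈ ℝ^n, where s̃ = (1, s₁, …, s_d). -/
def xvec (n d : ℕ) (h : d ≤ n) (A : Matrix (Fin (d+1)) (Fin (n-d)) ℝ) (s : Fin d → ℝ) :
    Fin n → ℝ :=
  fun i => Fin.append s (Matrix.vecMul (Fin.cons 1 s) A) (Fin.cast (Nat.add_sub_cancel' h).symm i)

/-- The set of exponents ω for which ‖Aq − p‖ ≤ ‖q‖^{−ω} has infinitely many solutions
q ∈ ℤ^{n−d} \ {0}, p ∈ ℤ^{d+1}. -/
def diophSet (n d : ℕ) (A : Matrix (Fin (d+1)) (Fin (n-d)) ℝ) : Set ℝ :=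
  {ω : ℝ | {qp : (Fin (n-d) → ℤ) × (Fin (d+1) → ℤ) | qp.1 ≠ 0 ∧
    ‖A.mulVec (fun i => (qp.1 i : ℝ)) - (fun i => (qp.2 i : ℝ))‖ ≤ ‖qp.1‖ ^ (-ω)}.Infinite}

/-- The Diophantine exponent ω(A) ∈ [−∞, +∞]. -/
def omegaExp (n d : ℕ) (A : Matrix (Fin (d+1)) (Fin (n-d)) ℝ) : EReal :=
  sSup (Real.toEReal '' diophSet n d A)

end

/-! ### Auxiliary development for Statement 2 -/

noncomputable section Stmt2Aux

open scoped Pointwise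

namespace Stmt2

lemma finsetEmb_mem {m k : ℕ} (J : Idx m k) (a : Fin k) : finsetEmb J a ∈ J.1 :=
  (J.1.orderIsoOfFin J.2 a).2

lemma finsetEmb_injective {m k : ℕ} (J : Idx m k) : Function.Injective (finsetEmb J) :=
  fun a b h => (J.1.orderIsoOfFin J.2).injective (Subtype.ext h)

lemma finsetEmb_surj {m k : ℕ} (J : Idx m k) {x : Fin m} (hx : x ∈ J.1) :
    ∃ a, finsetEmb J a = x :=
  ⟨(J.1.orderIsoOfFin J.2).symm ⟨x, hx⟩, by simp [finsetEmb]⟩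

variable {d i : ℕ}

lemma finsetEmb_zero [NeZero i] {J : Idx (d+1) i} (h0 : (0 : Fin (d+1)) ∈ J.1) :
    finsetEmb J (0 : Fin i) = 0 := by
  set e := J.1.orderIsoOfFin J.2 with he
  have h2 : (⟨0, h0⟩ : {x // x ∈ J.1}) ≤ e 0 := Subtype.mk_le_mk.mpr (Fin.zero_le _)
  have h3 : e.symm ⟨0, h0⟩ ≤ 0 := by simpa using e.symm.monotone h2
  have h4 : e.symm ⟨0, h0⟩ = 0 := le_antisymm h3 (Fin.zero_le _)
  have h5 : e 0 = ⟨0, h0⟩ := by rw [← h4, e.apply_symm_apply]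
  simpa [finsetEmb, he] using congrArg Subtype.val h5

lemma finsetEmb_ne_zero [NeZero i] {J : Idx (d+1) i} (h0 : (0 : Fin (d+1)) ∈ J.1)
    {a : Fin i} (ha : a ≠ 0) : finsetEmb J a ≠ 0 := fun h =>
  ha (finsetEmb_injective J (h.trans (finsetEmb_zero h0).symm))

/-- The linear-in-`s` part of the first row of `uxMat d s`. -/
def cRow (d : ℕ) (s : Fin d → ℝ) : Fin (d+1) → ℝ :=
  fun k => if h : 1 ≤ (k : ℕ) then s ⟨(k : ℕ) - 1, by have := k.isLt; omega⟩ else 0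

lemma cRow_add (s t : Fin d → ℝ) (k : Fin (d+1)) :
    cRow d (s + t) k = cRow d s k + cRow d t k := by
  unfold cRow; split_ifs <;> simp

lemma cRow_smul (c : ℝ) (s : Fin d → ℝ) (k : Fin (d+1)) :
    cRow d (c • s) k = c * cRow d s k := by
  unfold cRow; split_ifs <;> simp

lemma cRow_single (j : Fin (d+1)) (hj : j ≠ 0) (k : Fin (d+1)) :
    cRow d (fun t => if (t : ℕ) + 1 = (j : ℕ) then 1 else 0) k
      = if k = j then 1 else 0 := by
  unfold cRow
  rcases Nat.lt_or_ge (k : ℕ) 1 with hk | hk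
  · rw [dif_neg (by omega), if_neg]
    intro h
    exact hj (by rw [← h]; exact Fin.ext (by simp only [Fin.val_zero]; omega))
  · rw [dif_pos hk]
    dsimp only
    by_cases h : (k : ℕ) - 1 + 1 = (j : ℕ)
    · rw [if_pos h, if_pos (Fin.ext (by omega))]
    · rw [if_neg h, if_neg fun hh => h (by have := congrArg Fin.val hh; omega)]

lemma uxMat_apply_zero (s : Fin d → ℝ) (k : Fin (d+1)) :
    uxMat d s 0 k = (if (0 : Fin (d+1)) = k then 1 else 0) + cRow d s k := by
  rcases eq_or_ne k 0 with rfl | hk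
  · simp [uxMat, cRow]
  · have h1 : 1 ≤ (k : ℕ) := by
      have : (k : ℕ) ≠ 0 := fun h => hk (Fin.ext h)
      omega
    have h0 : (0 : Fin (d+1)) ≠ k := fun h => hk h.symm
    simp [uxMat, cRow, h0, h1]

lemma uxMat_apply_ne_zero (s : Fin d → ℝ) {r : Fin (d+1)} (hr : r ≠ 0) (k : Fin (d+1)) :
    uxMat d s r k = if r = k then 1 else 0 := by
  simp [uxMat, hr]

lemma uxMat_zero_eq_one : uxMat d (0 : Fin d → ℝ) = 1 := by
  ext r k
  rw [Matrix.one_apply]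
  unfold uxMat
  simp only [Matrix.of_apply, Pi.zero_apply]
  split_ifs <;> rfl

/-- The `s`-independent submatrix. -/
def baseM (J K : Idx (d+1) i) : Matrix (Fin i) (Fin i) ℝ :=
  (1 : Matrix (Fin (d+1)) (Fin (d+1)) ℝ).submatrix (finsetEmb J) (finsetEmb K)

lemma baseM_apply (J K : Idx (d+1) i) (a b : Fin i) :
    baseM J K a b = if finsetEmb J a = finsetEmb K b then 1 else 0 := by
  simp [baseM, Matrix.one_apply]

/-- The linear-in-`s` matrix obtained by replacing row `0` by the linear part. -/
def lmat [NeZero i] (s : Fin d → ℝ) (J K : Idx (d+1) i) : Matrix (Fin i) (Fin i) ℝ :=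
  (baseM J K).updateRow 0 (fun b => cRow d s (finsetEmb K b))

lemma lmat_eq [NeZero i] (s : Fin d → ℝ) (J K : Idx (d+1) i) :
    lmat s J K = (baseM J K).updateRow 0 (fun b => cRow d s (finsetEmb K b)) := rfl

lemma det_decomp [NeZero i] (s : Fin d → ℝ) {J : Idx (d+1) i} (K : Idx (d+1) i)
    (h0 : (0 : Fin (d+1)) ∈ J.1) :
    ((uxMat d s).submatrix (finsetEmb J) (finsetEmb K)).det
      = (baseM J K).det + (lmat s J K).det := by
  have hrow : (fun b => (if (0 : Fin (d+1)) = finsetEmb K b then 1 else 0 : ℝ)) = baseM J K 0 := by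
    funext b
    rw [baseM_apply, finsetEmb_zero h0]
  have hM : (uxMat d s).submatrix (finsetEmb J) (finsetEmb K)
      = (baseM J K).updateRow 0
          ((fun b => if (0 : Fin (d+1)) = finsetEmb K b then 1 else 0)
            + fun b => cRow d s (finsetEmb K b)) := by
    ext a b
    rcases eq_or_ne a 0 with rfl | ha
    · rw [Matrix.submatrix_apply, Matrix.updateRow_self, finsetEmb_zero h0, Pi.add_apply,
        uxMat_apply_zero]
    · rw [Matrix.submatrix_apply, Matrix.updateRow_ne ha, baseM_apply,
        uxMat_apply_ne_zero s (finsetEmb_ne_zero h0 ha)]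
  rw [hM, Matrix.det_updateRow_add, hrow, Matrix.updateRow_eq_self, lmat_eq]

/-- The linear part of `s ↦ π₊(u(s)w)`. -/
def Bmap (d i : ℕ) [NeZero i] (w : Lam (d+1) i) : (Fin d → ℝ) →ₗ[ℝ] Lam (d+1) i where
  toFun s := fun J =>
    if (0 : Fin (d+1)) ∈ J.1 then ∑ K : Idx (d+1) i, (lmat s J K).det * w K else 0
  map_add' s t := by
    funext J
    by_cases h0 : (0 : Fin (d+1)) ∈ J.1
    · simp only [Pi.add_apply, if_pos h0, ← Finset.sum_add_distrib]
      refine Finset.sum_congr rfl fun K _ => ?_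
      have hadd : (fun b => cRow d (s + t) (finsetEmb K b))
          = (fun b => cRow d s (finsetEmb K b)) + fun b => cRow d t (finsetEmb K b) := by
        funext b; exact cRow_add s t _
      rw [lmat_eq, lmat_eq, lmat_eq, hadd, Matrix.det_updateRow_add, add_mul]
    · simp [h0]
  map_smul' c s := by
    funext J
    by_cases h0 : (0 : Fin (d+1)) ∈ J.1
    · simp only [RingHom.id_apply, Pi.smul_apply, smul_eq_mul, if_pos h0, Finset.mul_sum]
      refine Finset.sum_congr rfl fun K _ => ?_
      have hsmul : (fun b => cRow d (c • s) (finsetEmb K b))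
          = c • fun b => cRow d s (finsetEmb K b) := by
        funext b; exact cRow_smul c s _
      rw [lmat_eq, lmat_eq, hsmul, Matrix.det_updateRow_smul, mul_assoc]
    · simp [h0]

lemma Bmap_apply [NeZero i] (w : Lam (d+1) i) (s : Fin d → ℝ) (J : Idx (d+1) i) :
    Bmap d i w s J
      = if (0 : Fin (d+1)) ∈ J.1 then ∑ K : Idx (d+1) i, (lmat s J K).det * w K else 0 := rfl

lemma projPlus_extPow_eq [NeZero i] (w : Lam (d+1) i) (s : Fin d → ℝ) :
    projPlus (extPow (uxMat d s) w)
      = projPlus (extPow (uxMat d (0 : Fin d → ℝ)) w) + Bmap d i w s := by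
  funext J
  by_cases h0 : (0 : Fin (d+1)) ∈ J.1
  · simp only [projPlus, extPow, Pi.add_apply, if_pos h0, Bmap_apply, uxMat_zero_eq_one,
      ← Finset.sum_add_distrib]
    refine Finset.sum_congr rfl fun K _ => ?_
    rw [det_decomp s K h0, add_mul, baseM]
  · simp [projPlus, h0, Bmap_apply]

theorem main_aux (d i : ℕ) (hi1 : 1 ≤ i) (hid : i ≤ d)
    (w : Lam (d+1) i) (hw : projMinus w ≠ 0) :
    ∃ W : AffineSubspace ℝ (Lam (d+1) i),
      (W : Set (Lam (d+1) i)) =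
        Set.range (fun s : Fin d → ℝ => projPlus (extPow (uxMat d s) w)) ∧
      i ≤ Module.finrank ℝ W.direction := by
  haveI : NeZero i := ⟨by omega⟩
  classical
  obtain ⟨J₀, hJ₀⟩ := Function.ne_iff.mp hw
  have h0J₀ : (0 : Fin (d+1)) ∉ J₀.1 := by
    intro h
    apply hJ₀
    simp [projMinus, h]
  have hwJ₀ : w J₀ ≠ 0 := by
    simpa [projMinus, h0J₀] using hJ₀
  have hjne0 : ∀ a : Fin i, finsetEmb J₀ a ≠ 0 := fun a h => h0J₀ (h ▸ finsetEmb_mem J₀ a)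
  set sA : Fin i → (Fin d → ℝ) :=
    fun a t => if (t : ℕ) + 1 = (finsetEmb J₀ a : ℕ) then 1 else 0 with hsA
  have hcRow : ∀ (a : Fin i) (k : Fin (d+1)),
      cRow d (sA a) k = if k = finsetEmb J₀ a then 1 else 0 := by
    intro a k
    rw [hsA]
    exact cRow_single _ (hjne0 a) k
  have hcard : ∀ a : Fin i, (insert 0 (J₀.1.erase (finsetEmb J₀ a))).card = i := by
    intro a
    rw [Finset.card_insert_of_notMem (fun h => h0J₀ (Finset.mem_of_mem_erase h)),
      Finset.card_erase_of_mem (finsetEmb_mem J₀ a), J₀.2]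
    omega
  set Ja : Fin i → Idx (d+1) i :=
    fun a => ⟨insert 0 (J₀.1.erase (finsetEmb J₀ a)), hcard a⟩ with hJa
  have h0Ja : ∀ a, (0 : Fin (d+1)) ∈ (Ja a).1 := fun a => Finset.mem_insert_self _ _
  have hrow0 : ∀ (a a' : Fin i) (K : Idx (d+1) i) (b : Fin i),
      (lmat (sA a) (Ja a') K) 0 b = if finsetEmb K b = finsetEmb J₀ a then 1 else 0 := by
    intro a a' K b
    rw [lmat_eq, Matrix.updateRow_self]
    exact hcRow a _
  have hrowc : ∀ (a a' : Fin i) (K : Idx (d+1) i) {c : Fin i} (hc : c ≠ 0) (b : Fin i),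
      (lmat (sA a) (Ja a') K) c b
        = if finsetEmb (Ja a') c = finsetEmb K b then 1 else 0 := by
    intro a a' K c hc b
    rw [lmat_eq, Matrix.updateRow_ne hc, baseM_apply]
  -- off-diagonal vanishing
  have offdiag : ∀ a a' : Fin i, a ≠ a' → ∀ K : Idx (d+1) i,
      (lmat (sA a) (Ja a') K).det = 0 := by
    intro a a' hne K
    have hmem : finsetEmb J₀ a ∈ (Ja a').1 := by
      refine Finset.mem_insert_of_mem (Finset.mem_erase.mpr ⟨?_, finsetEmb_mem J₀ a⟩)
      exact fun h => hne (finsetEmb_injective J₀ h)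
    obtain ⟨c, hc⟩ := finsetEmb_surj (Ja a') hmem
    have hcne : c ≠ 0 := by
      intro h
      rw [h, finsetEmb_zero (h0Ja a')] at hc
      exact hjne0 a hc.symm
    refine Matrix.det_zero_of_row_eq (Ne.symm hcne) ?_
    funext b
    rw [hrow0, hrowc a a' K hcne, hc]
    by_cases h : finsetEmb K b = finsetEmb J₀ a
    · rw [if_pos h, if_pos h.symm]
    · rw [if_neg h, if_neg fun hh => h hh.symm]
  -- diagonal: only K = J₀ contributes
  have diagK : ∀ (a : Fin i) (K : Idx (d+1) i), K ≠ J₀ → (lmat (sA a) (Ja a) K).det = 0 := by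
    intro a K hKne
    by_cases hj : finsetEmb J₀ a ∈ K.1
    · by_cases hsub : ∀ c : Fin i, c ≠ 0 → finsetEmb (Ja a) c ∈ K.1
      · exfalso
        apply hKne
        apply Subtype.ext
        refine (Finset.eq_of_subset_of_card_le ?_ (by rw [K.2, J₀.2])).symm
        intro x hx
        rcases eq_or_ne x (finsetEmb J₀ a) with rfl | hxne
        · exact hj
        · have hx' : x ∈ (Ja a).1 :=
            Finset.mem_insert_of_mem (Finset.mem_erase.mpr ⟨hxne, hx⟩)
          obtain ⟨c, hc⟩ := finsetEmb_surj (Ja a) hx'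
          have hcne : c ≠ 0 := by
            intro h
            rw [h, finsetEmb_zero (h0Ja a)] at hc
            rw [← hc] at hx
            exact h0J₀ hx
          rw [← hc]
          exact hsub c hcne
      · push_neg at hsub
        obtain ⟨c, hcne, hcK⟩ := hsub
        apply Matrix.det_eq_zero_of_row_eq_zero c
        intro b
        rw [hrowc a a K hcne, if_neg]
        intro h
        exact hcK (h ▸ finsetEmb_mem K b)
    · apply Matrix.det_eq_zero_of_row_eq_zero 0
      intro b
      rw [hrow0, if_neg]
      intro h
      exact hj (h ▸ finsetEmb_mem K b)
  -- diagonal determinant is nonzero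
  have diagdet : ∀ a : Fin i, (lmat (sA a) (Ja a) J₀).det ≠ 0 := by
    intro a
    have hne' : ∀ c : Fin i, c ≠ 0 → finsetEmb (Ja a) c ≠ finsetEmb J₀ a := by
      intro c hc
      have h1 := finsetEmb_mem (Ja a) c
      rcases Finset.mem_insert.mp h1 with h3 | h3
      · exact absurd h3 (finsetEmb_ne_zero (h0Ja a) hc)
      · exact Finset.ne_of_mem_erase h3
    have hgmem : ∀ c : Fin i,
        (if c = 0 then finsetEmb J₀ a else finsetEmb (Ja a) c) ∈ J₀.1 := by
      intro c
      split_ifs with h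
      · exact finsetEmb_mem J₀ a
      · have h1 := finsetEmb_mem (Ja a) c
        rcases Finset.mem_insert.mp h1 with h3 | h3
        · exact absurd h3 (finsetEmb_ne_zero (h0Ja a) h)
        · exact Finset.mem_of_mem_erase h3
    set g : Fin i → {x // x ∈ J₀.1} :=
      fun c => ⟨if c = 0 then finsetEmb J₀ a else finsetEmb (Ja a) c, hgmem c⟩ with hg
    have hg0 : (g 0 : Fin (d+1)) = finsetEmb J₀ a := by simp [hg]
    have hgc : ∀ c : Fin i, c ≠ 0 → (g c : Fin (d+1)) = finsetEmb (Ja a) c := by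
      intro c hc; simp [hg, hc]
    have hginj : Function.Injective g := by
      intro c c' hcc
      have hval := congrArg Subtype.val hcc
      by_cases h : c = 0 <;> by_cases h' : c' = 0
      · rw [h, h']
      · rw [hg] at hval
        simp only [if_pos h, if_neg h'] at hval
        exact absurd hval.symm (hne' c' h')
      · rw [hg] at hval
        simp only [if_pos h', if_neg h] at hval
        exact absurd hval (hne' c h)
      · rw [hg] at hval
        simp only [if_neg h, if_neg h'] at hval
        exact finsetEmb_injective (Ja a) hval
    set eJ := J₀.1.orderIsoOfFin J₀.2 with heJ
    have hτinj : Function.Injective (fun c => eJ.symm (g c)) :=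
      fun c c' h => hginj (eJ.symm.injective h)
    set σ : Equiv.Perm (Fin i) :=
      Equiv.ofBijective _ (Finite.injective_iff_bijective.mp hτinj) with hσ
    have hkey : ∀ c b : Fin i, σ c = b ↔ (g c : Fin (d+1)) = finsetEmb J₀ b := by
      intro c b
      rw [show σ c = eJ.symm (g c) from rfl, OrderIso.symm_apply_eq, Subtype.ext_iff]
      exact Iff.rfl
    have hmat : lmat (sA a) (Ja a) J₀ = (1 : Matrix (Fin i) (Fin i) ℝ).submatrix σ id := by
      ext c b
      rw [Matrix.submatrix_apply, id_eq, Matrix.one_apply]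
      rcases eq_or_ne c 0 with rfl | hc
      · rw [hrow0]
        have hcond : (finsetEmb J₀ b = finsetEmb J₀ a) ↔ (σ 0 = b) := by
          rw [hkey 0 b, hg0, eq_comm]
        by_cases h : σ 0 = b
        · rw [if_pos (hcond.mpr h), if_pos h]
        · rw [if_neg (fun hh => h (hcond.mp hh)), if_neg h]
      · rw [hrowc a a J₀ hc]
        have hcond : (finsetEmb (Ja a) c = finsetEmb J₀ b) ↔ (σ c = b) := by
          rw [hkey c b, hgc c hc]
        by_cases h : σ c = b
        · rw [if_pos (hcond.mpr h), if_pos h]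
        · rw [if_neg (fun hh => h (hcond.mp hh)), if_neg h]
    rw [hmat, Matrix.det_permute, Matrix.det_one, mul_one]
    rcases Int.units_eq_one_or (Equiv.Perm.sign σ) with h | h <;> simp [h]
  -- values of the linear map on the directions
  set B := Bmap d i w with hB
  have hPE : ∀ s : Fin d → ℝ, projPlus (extPow (uxMat d s) w)
      = projPlus (extPow (uxMat d (0 : Fin d → ℝ)) w) + B s := fun s => by
    rw [hB]; exact projPlus_extPow_eq w s
  have hva : ∀ a a' : Fin i,
      B (sA a) (Ja a') = if a' = a then (lmat (sA a) (Ja a) J₀).det * w J₀ else 0 := by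
    intro a a'
    rw [hB, Bmap_apply, if_pos (h0Ja a')]
    rcases eq_or_ne a' a with rfl | hne
    · rw [if_pos rfl]
      rw [Finset.sum_eq_single J₀ (fun K _ hK => by rw [diagK a' K hK, zero_mul])
        (fun h => absurd (Finset.mem_univ _) h)]
    · rw [if_neg hne]
      apply Finset.sum_eq_zero
      intro K _
      rw [offdiag a a' (Ne.symm hne) K, zero_mul]
  -- linear independence
  have hli : LinearIndependent ℝ (fun a : Fin i => B (sA a)) := by
    rw [Fintype.linearIndependent_iff]
    intro c hc a
    have h1 := congrFun hc (Ja a)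
    rw [Finset.sum_apply] at h1
    simp only [Pi.smul_apply, smul_eq_mul] at h1
    rw [Finset.sum_eq_single a
        (fun x _ hx => by rw [hva x a, if_neg (Ne.symm hx), mul_zero])
        (fun h => absurd (Finset.mem_univ _) h)] at h1
    rw [hva a a, if_pos rfl] at h1
    rcases mul_eq_zero.mp h1 with h | h
    · exact h
    · exact absurd h (mul_ne_zero (diagdet a) hwJ₀)
  refine ⟨projPlus (extPow (uxMat d (0 : Fin d → ℝ)) w) +ᵥ
      (LinearMap.range B).toAffineSubspace, ?_, ?_⟩
  · ext x
    rw [AffineSubspace.coe_pointwise_vadd]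
    simp only [Set.mem_vadd_set, SetLike.mem_coe, Submodule.mem_toAffineSubspace,
      LinearMap.mem_range, Set.mem_range, vadd_eq_add]
    constructor
    · rintro ⟨y, ⟨s, rfl⟩, rfl⟩
      exact ⟨s, hPE s⟩
    · rintro ⟨s, rfl⟩
      exact ⟨B s, ⟨s, rfl⟩, (hPE s).symm⟩
  · rw [AffineSubspace.pointwise_vadd_direction, Submodule.toAffineSubspace_direction]
    have hmem : ∀ a : Fin i, B (sA a) ∈ LinearMap.range B := fun a => ⟨sA a, rfl⟩
    have hli2 : LinearIndependent ℝ
        (fun a : Fin i => (⟨B (sA a), hmem a⟩ : LinearMap.range B)) := by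
      apply LinearIndependent.of_comp (LinearMap.range B).subtype
      exact hli
    simpa using hli2.fintype_card_le_finrank

end Stmt2

end Stmt2Aux


/-- if π₋(w) ≠ 0, the image of the affine map f_w(s) = π₊(u(s)w) is an
affine subspace of dimension at least i. -/
theorem image_of_affine_map_dim_ge
    (n d : ℕ) (hn : 2 ≤ n) (hd : 1 ≤ d) (hdn : d < n)
    (i : ℕ) (hi1 : 1 ≤ i) (hid : i ≤ d)
    (w : Lam (d+1) i) (hw : projMinus w ≠ 0) :
    ∃ W : AffineSubspace ℝ (Lam (d+1) i),
      (W : Set (Lam (d+1) i)) =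
        Set.range (fun s : Fin d → ℝ => projPlus (extPow (uxMat d s) w)) ∧
      i ≤ Module.finrank ℝ W.direction := by
  exact Stmt2.main_aux d i hi1 hid w hw
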